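/- Let C = (C_1,...,C_r) be a perfect coloring of H(n,q) with parameter matrix S whose matrix of eigenvectors T diagonalizes S, let α ∈ F_q^n and I ⊆ {1,...,n} with complement Ī. Define the row vector of local weight enumerators g^{I,α}_C(x,y) = (g^{I,α}_{C_1}(x,y),...,g^{I,α}_{C_r}(x,y)) where g^{I,α}_{C_i}(x,y) = ∑_{j=0}^{|I|} |C_i ∩ W_j(α) ∩ Γ_I(α)| y^j x^{|I|-j}. Then with h(S) = ((q-1)nE - S)/q (a matrix with integer eigenvalues), x' = x+(q-2)y, y' = -y, one has g^{Ī,α}_C(x,y) · (x+(q-1)y)^{h(S) - |Ī|E} = g^{I,α}_C(x',y') · (x'+(q-1)y')^{h(S) - |I|E}, where matrix powers t^{h(S)-kE} are defined via the diagonalization t^{h(S)-kE} = T diag(t^{h_i - k}) T^{-1} with h_i = ((q-1)n - μ_i)/q for the eigenvalues μ_i of S. -/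

import Mathlib

open Finset Matrix

noncomputable def xiq (q : ℕ) : ℂ := Complex.exp (2 * Real.pi * Complex.I / q)

/-- The character `φ^β(α) = ξ^{⟨α,β⟩}` on the q-ary Hamming space. -/
noncomputable def chr (q n : ℕ) [NeZero q] (β α : Fin n → ZMod q) : ℂ :=
  xiq q ^ (∑ i, α i * β i : ZMod q).val

/-- Fourier transform `f̂(α) = ∑_β f(β) conj(ξ^{⟨α,β⟩})`. -/
noncomputable def ftr (q n : ℕ) [NeZero q] (f : (Fin n → ZMod q) → ℂ)
    (α : Fin n → ZMod q) : ℂ :=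
  ∑ β : Fin n → ZMod q, f β * (starRingEnd ℂ) (chr q n β α)

/-- The face `Γ_I(α)` of the hypercube. -/
def face (q n : ℕ) [NeZero q] (I : Finset (Fin n)) (α : Fin n → ZMod q) :
    Finset (Fin n → ZMod q) :=
  Finset.univ.filter (fun β => ∀ i ∉ I, β i = α i)

/-- The support `s(β)` of a vertex. -/
def supp (q n : ℕ) [NeZero q] (β : Fin n → ZMod q) : Finset (Fin n) :=
  Finset.univ.filter (fun i => β i ≠ 0)

/-- Local weight enumerator `g^{I,α}_f(x,y)`. -/
noncomputable def lwe (q n : ℕ) [NeZero q] (f : (Fin n → ZMod q) → ℂ)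
    (I : Finset (Fin n)) (α : Fin n → ZMod q) (x y : ℂ) : ℂ :=
  ∑ β ∈ face q n I α, f β * y ^ hammingDist β α * x ^ (I.card - hammingDist β α)

/-- `f` is an eigenfunction of the Hamming graph `H(n,q)` with eigenvalue `μ`. -/
def IsEigenfun (q n : ℕ) [NeZero q] (f : (Fin n → ZMod q) → ℂ) (μ : ℂ) : Prop :=
  ∀ α, ∑ β ∈ Finset.univ.filter (fun β => hammingDist α β = 1), f β = μ * f α

/-- Adjacency matrix of the Hamming graph `H(n,q)`. -/
noncomputable def adjM (q n : ℕ) [NeZero q] :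
    Matrix (Fin n → ZMod q) (Fin n → ZMod q) ℂ :=
  fun α β => if hammingDist α β = 1 then 1 else 0

/-- Vertex-color incidence matrix of a coloring `c`. -/
noncomputable def colM (q n r : ℕ) [NeZero q] (c : (Fin n → ZMod q) → Fin r) :
    Matrix (Fin n → ZMod q) (Fin r) ℂ :=
  fun α i => if c α = i then 1 else 0

noncomputable def ep (q : ℕ) [NeZero q] (v : ZMod q) : ℂ := xiq q ^ v.val

section ep
variable (q : ℕ) [NeZero q]

lemma xiq_prim : IsPrimitiveRoot (xiq q) q := Complex.isPrimitiveRoot_exp q (NeZero.ne q)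

lemma xiq_pow_q : xiq q ^ q = 1 := (xiq_prim q).pow_eq_one

lemma xiq_pow_mod (m : ℕ) : xiq q ^ (m % q) = xiq q ^ m := by
  conv_rhs => rw [← Nat.mod_add_div m q]
  rw [pow_add, pow_mul, xiq_pow_q, one_pow, mul_one]

lemma ep_zero : ep q 0 = 1 := by simp [ep, ZMod.val_zero]

lemma ep_add (u v : ZMod q) : ep q (u + v) = ep q u * ep q v := by
  rw [ep, ep, ep, ZMod.val_add, xiq_pow_mod, pow_add]

lemma ep_ne_zero (v : ZMod q) : ep q v ≠ 0 := by
  have : xiq q ≠ 0 := Complex.exp_ne_zero _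
  exact pow_ne_zero _ this

lemma ep_mul_neg (v : ZMod q) : ep q v * ep q (-v) = 1 := by
  rw [← ep_add, add_neg_cancel, ep_zero]

lemma conj_ep (v : ZMod q) : (starRingEnd ℂ) (ep q v) = ep q (-v) := by
  have h1 : (starRingEnd ℂ) (xiq q) = (xiq q)⁻¹ := by
    rw [xiq]
    rw [← Complex.exp_conj, ← Complex.exp_neg]
    congr 1
    simp only [_root_.map_div₀, _root_.map_mul, Complex.conj_I, Complex.conj_ofReal, map_ofNat, _root_.map_natCast]
    ring
  have h2 : ep q (-v) = (ep q v)⁻¹ :=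
    eq_inv_of_mul_eq_one_left (by rw [mul_comm] at *; exact ep_mul_neg q v)
  rw [ep, _root_.map_pow, h1, h2, ep, inv_pow]

lemma ep_sum {ι : Type*} (s : Finset ι) (f : ι → ZMod q) :
    ep q (∑ i ∈ s, f i) = ∏ i ∈ s, ep q (f i) := by
  classical
  induction s using Finset.cons_induction with
  | empty => simp [ep_zero]
  | cons a s ha ih => rw [Finset.sum_cons, Finset.prod_cons, ep_add, ih]

lemma sum_ep (b : ZMod q) : ∑ a : ZMod q, ep q (a * b) = if b = 0 then (q : ℂ) else 0 := by
  split_ifs with hb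
  · subst hb; simp [ep_zero, ZMod.card]
  · have key : ep q b * ∑ a : ZMod q, ep q (a * b) = ∑ a : ZMod q, ep q (a * b) := by
      rw [Finset.mul_sum]
      apply Fintype.sum_bijective (· + (1 : ZMod q)) (Equiv.addRight (1:ZMod q)).bijective
      intro a
      rw [← ep_add]
      congr 1
      ring
    have h2 : (ep q b - 1) * ∑ a : ZMod q, ep q (a * b) = 0 := by
      rw [sub_mul, one_mul, key, sub_self]
    rcases mul_eq_zero.1 h2 with h | h
    · exfalso
      have hval : b.val ≠ 0 := fun h0 => hb ((ZMod.val_eq_zero b).1 h0)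
      have := (xiq_prim q).pow_ne_one_of_pos_of_lt hval (ZMod.val_lt b)
      exact this (by rwa [sub_eq_zero] at h)
    · exact h
end ep

section chr
variable (q n : ℕ) [NeZero q]

lemma chr_eq (β α : Fin n → ZMod q) : chr q n β α = ep q (∑ i, α i * β i) := rfl

lemma card_subtype_filter {ι : Type*} (s : Finset ι) (p : ι → Prop) [DecidablePred p] :
    (Finset.univ.filter fun i : {x // x ∈ s} => p ↑i).card = (s.filter p).card := by
  rw [Finset.card_filter, Finset.card_filter,
    ← Finset.sum_coe_sort s (fun i => if p i then 1 else 0)]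

lemma sum_face (I : Finset (Fin n)) (α : Fin n → ZMod q) (F : (Fin n → ZMod q) → ℂ) :
    ∑ γ ∈ face q n I α, F γ =
      ∑ δ : {i // i ∈ I} → ZMod q, F (fun i => α i + if h : i ∈ I then δ ⟨i, h⟩ else 0) := by
  classical
  apply Finset.sum_bij' (i := fun γ _ => fun j : {i // i ∈ I} => γ ↑j - α ↑j)
    (j := fun δ _ => fun i => α i + if h : i ∈ I then δ ⟨i, h⟩ else 0)
  · intro γ hγ; exact Finset.mem_univ _
  · intro δ _
    simp only [face, Finset.mem_filter, Finset.mem_univ, true_and]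
    intro i hi
    rw [dif_neg hi, add_zero]
  · intro γ hγ
    simp only [face, Finset.mem_filter, Finset.mem_univ, true_and] at hγ
    funext i
    by_cases h : i ∈ I
    · rw [dif_pos h]; ring
    · rw [dif_neg h, add_zero, hγ i h]
  · intro δ _
    funext j
    simp
  · intro γ hγ
    simp only [face, Finset.mem_filter, Finset.mem_univ, true_and] at hγ
    congr 1
    funext i
    by_cases h : i ∈ I
    · rw [dif_pos h]; ring
    · rw [dif_neg h, add_zero, hγ i h]

lemma lwe_chr (β α : Fin n → ZMod q) (I : Finset (Fin n)) (x y : ℂ) :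
    lwe q n (chr q n β) I α x y =
      chr q n β α * (x + ((q : ℂ) - 1) * y) ^ (I.filter fun i => β i = 0).card
        * (x - y) ^ (I.filter fun i => ¬ β i = 0).card := by
  classical
  rw [lwe, sum_face]
  have hA : ∀ δ : {i // i ∈ I} → ZMod q,
      chr q n β (fun i => α i + if h : i ∈ I then δ ⟨i, h⟩ else 0)
        = chr q n β α * ∏ i : {i // i ∈ I}, ep q (δ i * β ↑i) := by
    intro δ
    rw [chr_eq, chr_eq]
    have e2 : ∑ i : Fin n, (if h : i ∈ I then δ ⟨i, h⟩ else 0) * β i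
        = ∑ i : {i // i ∈ I}, δ i * β ↑i := by
      calc ∑ i : Fin n, (if h : i ∈ I then δ ⟨i, h⟩ else 0) * β i
          = ∑ i ∈ I, (if h : i ∈ I then δ ⟨i, h⟩ else 0) * β i :=
            (Finset.sum_subset (Finset.subset_univ I)
              (fun i _ hi => by rw [dif_neg hi, zero_mul])).symm
        _ = ∑ i : {i // i ∈ I}, δ i * β ↑i := by
            rw [← Finset.sum_coe_sort I (fun i => (if h : i ∈ I then δ ⟨i, h⟩ else 0) * β i)]
            exact Finset.sum_congr rfl fun j _ => by simp
    have e1 : (∑ i, (α i + if h : i ∈ I then δ ⟨i, h⟩ else 0) * β i)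
        = (∑ i, α i * β i) + ∑ i : {i // i ∈ I}, δ i * β ↑i := by
      calc (∑ i, (α i + if h : i ∈ I then δ ⟨i, h⟩ else 0) * β i)
          = ∑ i, (α i * β i + (if h : i ∈ I then δ ⟨i, h⟩ else 0) * β i) :=
            Finset.sum_congr rfl (fun i _ => by ring)
        _ = (∑ i, α i * β i) + ∑ i : Fin n, (if h : i ∈ I then δ ⟨i, h⟩ else 0) * β i :=
            Finset.sum_add_distrib
        _ = _ := by rw [e2]
    rw [e1, ep_add, ep_sum q Finset.univ (fun i : {i // i ∈ I} => δ i * β ↑i)]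
  have hB : ∀ δ : {i // i ∈ I} → ZMod q,
      hammingDist (fun i => α i + if h : i ∈ I then δ ⟨i, h⟩ else 0) α
        = (Finset.univ.filter fun i : {i // i ∈ I} => δ i ≠ 0).card := by
    intro δ
    have hset : (Finset.univ.filter fun i : Fin n =>
          (fun i => α i + if h : i ∈ I then δ ⟨i, h⟩ else 0) i ≠ α i)
        = I.filter (fun i => ¬ (if h : i ∈ I then δ ⟨i, h⟩ else 0) = 0) := by
      ext i
      simp only [Finset.mem_filter, Finset.mem_univ, true_and]
      constructor
      · intro hi
        have hd : ¬ (if h : i ∈ I then δ ⟨i, h⟩ else 0) = 0 := by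
          intro h0; apply hi; rw [h0, add_zero]
        refine ⟨?_, hd⟩
        by_contra hiI
        exact hd (dif_neg hiI)
      · rintro ⟨_, hd⟩ hcon
        exact hd (by rwa [add_eq_left] at hcon)
    have : hammingDist (fun i => α i + if h : i ∈ I then δ ⟨i, h⟩ else 0) α
        = (I.filter (fun i => ¬ (if h : i ∈ I then δ ⟨i, h⟩ else 0) = 0)).card := by
      rw [hammingDist]
      exact congrArg Finset.card hset
    rw [this, ← card_subtype_filter I (fun i => ¬ (if h : i ∈ I then δ ⟨i, h⟩ else 0) = 0)]
    apply congrArg Finset.card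
    apply Finset.filter_congr
    intro j _
    simp
  have hC : ∀ δ : {i // i ∈ I} → ZMod q,
      y ^ hammingDist (fun i => α i + if h : i ∈ I then δ ⟨i, h⟩ else 0) α
        * x ^ (I.card - hammingDist (fun i => α i + if h : i ∈ I then δ ⟨i, h⟩ else 0) α)
      = ∏ i : {i // i ∈ I}, (if δ i ≠ 0 then y else x) := by
    intro δ
    rw [hB δ, Finset.prod_ite (fun _ => y) (fun _ => x), Finset.prod_const, Finset.prod_const]
    have hcards := Finset.card_filter_add_card_filter_not
      (s := (Finset.univ : Finset {i // i ∈ I})) (fun i => δ i ≠ 0)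
    have hcardI : (Finset.univ : Finset {i // i ∈ I}).card = I.card := by
      rw [Finset.card_univ, Fintype.card_coe]
    have hexp : I.card - (Finset.univ.filter (fun i : {i // i ∈ I} => δ i ≠ 0)).card
        = (Finset.univ.filter (fun i : {i // i ∈ I} => ¬ δ i ≠ 0)).card := by omega
    rw [hexp]
  have step : ∀ δ : {i // i ∈ I} → ZMod q,
      chr q n β (fun i => α i + if h : i ∈ I then δ ⟨i, h⟩ else 0)
        * y ^ hammingDist (fun i => α i + if h : i ∈ I then δ ⟨i, h⟩ else 0) α
        * x ^ (I.card - hammingDist (fun i => α i + if h : i ∈ I then δ ⟨i, h⟩ else 0) α)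
      = chr q n β α * ∏ i : {i // i ∈ I},
          (ep q (δ i * β ↑i) * (if δ i ≠ 0 then y else x)) := by
    intro δ
    rw [mul_assoc, hA δ, hC δ, Finset.prod_mul_distrib]
    ring
  rw [Finset.sum_congr rfl (fun δ _ => step δ), ← Finset.mul_sum]
  have swap : ∑ δ : {i // i ∈ I} → ZMod q, ∏ i : {i // i ∈ I},
        (ep q (δ i * β ↑i) * (if δ i ≠ 0 then y else x))
      = ∏ i : {i // i ∈ I}, ∑ a : ZMod q, ep q (a * β ↑i) * (if a ≠ 0 then y else x) := by
    rw [Finset.prod_univ_sum (fun _ : {i // i ∈ I} => (Finset.univ : Finset (ZMod q)))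
      (fun i a => ep q (a * β ↑i) * (if a ≠ 0 then y else x)), Fintype.piFinset_univ]
  rw [swap]
  have hin : ∀ b : ZMod q, ∑ a : ZMod q, ep q (a * b) * (if a ≠ 0 then y else x)
      = if b = 0 then x + ((q : ℂ) - 1) * y else x - y := by
    intro b
    rw [← Finset.add_sum_erase _ _ (Finset.mem_univ (0 : ZMod q))]
    have h0 : ep q ((0 : ZMod q) * b) * (if (0 : ZMod q) ≠ 0 then y else x) = x := by
      rw [zero_mul, ep_zero, one_mul, if_neg (by simp)]
    have herase : ∀ a ∈ Finset.univ.erase (0 : ZMod q),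
        ep q (a * b) * (if a ≠ 0 then y else x) = ep q (a * b) * y := by
      intro a ha
      rw [if_pos (Finset.ne_of_mem_erase ha)]
    rw [h0, Finset.sum_congr rfl herase, ← Finset.sum_mul]
    have hsum : ∑ a ∈ Finset.univ.erase (0 : ZMod q), ep q (a * b)
        = (if b = 0 then (q : ℂ) else 0) - 1 := by
      have h1 := Finset.add_sum_erase Finset.univ (fun a => ep q (a * b))
        (Finset.mem_univ (0 : ZMod q))
      rw [sum_ep] at h1
      simp only [zero_mul, ep_zero] at h1
      linear_combination h1
    rw [hsum]
    split_ifs with hb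
    · ring
    · ring
  have hfinal : (∏ i : {i // i ∈ I}, ∑ a : ZMod q, ep q (a * β ↑i) * (if a ≠ 0 then y else x))
      = ∏ i : {i // i ∈ I}, (if β ↑i = 0 then x + ((q : ℂ) - 1) * y else x - y) :=
    Finset.prod_congr rfl (fun i _ => hin (β ↑i))
  rw [hfinal,
    Finset.prod_ite (fun _ => x + ((q : ℂ) - 1) * y) (fun _ => x - y),
    Finset.prod_const, Finset.prod_const,
    card_subtype_filter I (fun i => β i = 0),
    card_subtype_filter I (fun i => ¬ β i = 0)]
  ring

section chr2
variable (q n : ℕ) [NeZero q]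

lemma chr_symm (β α : Fin n → ZMod q) : chr q n β α = chr q n α β := by
  rw [chr_eq, chr_eq]
  congr 1
  exact Finset.sum_congr rfl fun i _ => mul_comm _ _

lemma sum_chr_mul_conj (β γ : Fin n → ZMod q) :
    ∑ α : Fin n → ZMod q, chr q n β α * (starRingEnd ℂ) (chr q n γ α)
      = if β = γ then (q : ℂ) ^ n else 0 := by
  classical
  have hterm : ∀ α : Fin n → ZMod q, chr q n β α * (starRingEnd ℂ) (chr q n γ α)
      = ∏ i : Fin n, ep q (α i * (β i - γ i)) := by
    intro α
    rw [chr_eq, chr_eq, conj_ep, ← ep_add, ← ep_sum]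
    congr 1
    rw [← Finset.sum_neg_distrib, ← Finset.sum_add_distrib]
    exact Finset.sum_congr rfl fun i _ => by ring
  rw [Finset.sum_congr rfl (fun α _ => hterm α)]
  have hswap : (∑ α : Fin n → ZMod q, ∏ i : Fin n, ep q (α i * (β i - γ i)))
      = ∏ i : Fin n, ∑ a : ZMod q, ep q (a * (β i - γ i)) := by
    rw [Finset.prod_univ_sum (fun _ : Fin n => (Finset.univ : Finset (ZMod q)))
      (fun i a => ep q (a * (β i - γ i))), Fintype.piFinset_univ]
  rw [hswap, Finset.prod_congr rfl (fun i _ => sum_ep q (β i - γ i))]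
  split_ifs with h
  · subst h
    simp [Finset.prod_const]
  · obtain ⟨i, hi⟩ := Function.ne_iff.1 h
    refine Finset.prod_eq_zero (Finset.mem_univ i) ?_
    rw [if_neg (fun h0 => hi (sub_eq_zero.1 h0))]

lemma sum_chr_conj_chr (α γ : Fin n → ZMod q) :
    ∑ β : Fin n → ZMod q, chr q n β α * (starRingEnd ℂ) (chr q n β γ)
      = if α = γ then (q : ℂ) ^ n else 0 := by
  rw [Finset.sum_congr rfl (fun β _ => by rw [chr_symm q n β α, chr_symm q n β γ])]
  exact sum_chr_mul_conj q n α γ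

lemma inversion (f : (Fin n → ZMod q) → ℂ) (α : Fin n → ZMod q) :
    ∑ β : Fin n → ZMod q, ftr q n f β * chr q n β α = (q : ℂ) ^ n * f α := by
  classical
  simp only [ftr, Finset.sum_mul]
  rw [Finset.sum_comm]
  have step : ∀ γ : Fin n → ZMod q,
      (∑ β : Fin n → ZMod q, f γ * (starRingEnd ℂ) (chr q n γ β) * chr q n β α)
        = f γ * (if α = γ then (q : ℂ) ^ n else 0) := by
    intro γ
    rw [← sum_chr_conj_chr q n α γ, Finset.mul_sum]
    refine Finset.sum_congr rfl fun β _ => ?_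
    rw [chr_symm q n γ β, chr_symm q n β α]
    ring
  rw [Finset.sum_congr rfl (fun γ _ => step γ)]
  simp only [mul_ite, mul_zero]
  rw [Finset.sum_ite_eq Finset.univ α (fun γ => f γ * (q:ℂ)^n), if_pos (Finset.mem_univ α)]
  ring

lemma chr_update (β α : Fin n → ZMod q) (i : Fin n) (a : ZMod q) :
    chr q n β (Function.update α i a) * ep q (α i * β i)
      = chr q n β α * ep q (a * β i) := by
  classical
  rw [chr_eq, chr_eq, ← ep_add, ← ep_add]
  congr 1
  have h1 : ∀ j : Fin n, Function.update α i a j * β j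
      = Function.update (fun j => α j * β j) i (a * β i) j := by
    intro j
    by_cases hj : j = i
    · subst hj; simp
    · simp [Function.update_of_ne hj]
  rw [Finset.sum_congr rfl (fun j _ => h1 j),
    Finset.sum_update_of_mem (Finset.mem_univ i),
    ← Finset.add_sum_erase Finset.univ (fun j => α j * β j) (Finset.mem_univ i),
    Finset.erase_eq]
  ring

lemma eig_chr (β : Fin n → ZMod q) :
    IsEigenfun q n (chr q n β)
      (((q : ℂ) - 1) * n - (q : ℂ) * ((supp q n β).card : ℕ)) := by
  classical
  intro α
  have hset : (Finset.univ.filter fun γ : Fin n → ZMod q => hammingDist α γ = 1)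
      = Finset.univ.biUnion (fun i : Fin n =>
          (Finset.univ.filter (fun a : ZMod q => a ≠ α i)).image
            (fun a => Function.update α i a)) := by
    ext γ
    simp only [Finset.mem_filter, Finset.mem_univ, true_and, Finset.mem_biUnion,
      Finset.mem_image]
    constructor
    · intro h1
      obtain ⟨i, hi⟩ := Finset.card_eq_one.1 h1
      refine ⟨i, γ i, ?_, ?_⟩
      · intro hgi
        have : i ∈ Finset.univ.filter (fun j => α j ≠ γ j) := hi ▸ Finset.mem_singleton_self i
        exact (Finset.mem_filter.1 this).2 hgi.symm
      · funext j
        by_cases hj : j = i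
        · subst hj; simp
        · rw [Function.update_of_ne hj]
          by_contra hne
          have : j ∈ Finset.univ.filter (fun j => α j ≠ γ j) :=
            Finset.mem_filter.2 ⟨Finset.mem_univ _, hne⟩
          rw [hi, Finset.mem_singleton] at this
          exact hj this
    · rintro ⟨i, a, ha', rfl⟩
      have : (Finset.univ.filter fun j => α j ≠ Function.update α i a j) = {i} := by
        ext j
        simp only [Finset.mem_filter, Finset.mem_univ, true_and, Finset.mem_singleton]
        by_cases hj : j = i
        · subst hj
          simp only [Function.update_self]
          exact iff_of_true (fun h => ha' h.symm) trivial
        · simp [Function.update_of_ne hj, hj]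
      rw [hammingDist, this, Finset.card_singleton]
  rw [hset]
  have hdisj : ∀ i ∈ (Finset.univ : Finset (Fin n)), ∀ j ∈ (Finset.univ : Finset (Fin n)),
      i ≠ j → Disjoint
        ((Finset.univ.filter (fun a : ZMod q => a ≠ α i)).image (fun a => Function.update α i a))
        ((Finset.univ.filter (fun a : ZMod q => a ≠ α j)).image (fun a => Function.update α j a)) := by
    intro i _ j _ hij
    rw [Finset.disjoint_left]
    rintro γ hγi hγj
    obtain ⟨a, ha, rfl⟩ := Finset.mem_image.1 hγi
    obtain ⟨b, hb, hba⟩ := Finset.mem_image.1 hγj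
    have ha' : a ≠ α i := (Finset.mem_filter.1 ha).2
    have := congrFun hba i
    rw [Function.update_of_ne hij, Function.update_self] at this
    exact ha' this.symm
  rw [Finset.sum_biUnion hdisj]
  have hinj : ∀ i : Fin n, ∀ a ∈ Finset.univ.filter (fun a : ZMod q => a ≠ α i),
      ∀ b ∈ Finset.univ.filter (fun a : ZMod q => a ≠ α i),
      Function.update α i a = Function.update α i b → a = b := by
    intro i a _ b _ hab
    have := congrFun hab i
    simpa using this
  rw [Finset.sum_congr rfl (fun i _ => Finset.sum_image (hinj i))]
  have hinner : ∀ i : Fin n,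
      ∑ a ∈ Finset.univ.filter (fun a : ZMod q => a ≠ α i),
        chr q n β (Function.update α i a)
      = chr q n β α * ((if β i = 0 then (q : ℂ) else 0) - 1) := by
    intro i
    have hkey : (∑ a ∈ Finset.univ.filter (fun a : ZMod q => a ≠ α i),
          chr q n β (Function.update α i a)) * ep q (α i * β i)
        = chr q n β α * ((if β i = 0 then (q : ℂ) else 0) - ep q (α i * β i)) := by
      rw [Finset.sum_mul, Finset.sum_congr rfl (fun a _ => chr_update q n β α i a),
        ← Finset.mul_sum]
      congr 1
      rw [Finset.filter_ne']
      have h1 := Finset.add_sum_erase Finset.univ (fun a => ep q (a * β i))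
        (Finset.mem_univ (α i))
      rw [sum_ep] at h1
      linear_combination h1
    by_cases hb : β i = 0
    · rw [if_pos hb] at hkey ⊢
      rw [hb, mul_zero, ep_zero, mul_one] at hkey
      exact hkey
    · rw [if_neg hb] at hkey ⊢
      have hkey2 : (∑ a ∈ Finset.univ.filter (fun a : ZMod q => a ≠ α i),
            chr q n β (Function.update α i a)) * ep q (α i * β i)
          = (chr q n β α * (0 - 1)) * ep q (α i * β i) := by
        linear_combination hkey
      exact mul_right_cancel₀ (ep_ne_zero q (α i * β i)) hkey2
  rw [Finset.sum_congr rfl (fun i _ => hinner i), ← Finset.mul_sum]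
  have hcount : ∑ i : Fin n, ((if β i = 0 then (q : ℂ) else 0) - 1)
      = ((q : ℂ) - 1) * n - (q : ℂ) * ((supp q n β).card : ℕ) := by
    rw [Finset.sum_sub_distrib, Finset.sum_const, Finset.sum_ite, Finset.sum_const,
      Finset.sum_const, Finset.card_univ, Fintype.card_fin]
    have hsplit := Finset.card_filter_add_card_filter_not
      (s := (Finset.univ : Finset (Fin n))) (fun i => β i = 0)
    rw [Finset.card_univ, Fintype.card_fin] at hsplit
    have hsupp : (supp q n β).card
        = (Finset.univ.filter (fun i => ¬ β i = 0)).card := by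
      apply congrArg Finset.card
      apply Finset.filter_congr
      intro i _
      simp [ne_eq]
    have hle : (Finset.univ.filter (fun i => ¬ β i = 0)).card ≤ n := by omega
    rw [hsupp]
    have hc0 : (Finset.univ.filter (fun i : Fin n => β i = 0)).card
        = n - (Finset.univ.filter (fun i => ¬ β i = 0)).card := by omega
    rw [hc0]
    simp only [nsmul_eq_mul, mul_zero, add_zero, mul_one, smul_eq_mul, Nat.cast_sub hle]
    push_cast
    ring
  rw [hcount]
  ring

lemma ftr_eig (f : (Fin n → ZMod q) → ℂ) (μ : ℂ) (hf : IsEigenfun q n f μ)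
    (β : Fin n → ZMod q)
    (hne : μ ≠ ((q : ℂ) - 1) * n - (q : ℂ) * ((supp q n β).card : ℕ)) :
    ftr q n f β = 0 := by
  classical
  set lam : ℂ := ((q : ℂ) - 1) * n - (q : ℂ) * ((supp q n β).card : ℕ) with hlam
  have hconj : (starRingEnd ℂ) lam = lam := by
    rw [hlam]
    simp [_root_.map_sub, _root_.map_mul, _root_.map_natCast, _root_.map_one]
  have hftr : ftr q n f β = ∑ γ : Fin n → ZMod q, f γ * (starRingEnd ℂ) (chr q n β γ) :=
    Finset.sum_congr rfl fun γ _ => by rw [chr_symm q n γ β]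
  have key : μ * ftr q n f β = lam * ftr q n f β := by
    have h1 : μ * ftr q n f β
        = ∑ α : Fin n → ZMod q,
            (∑ γ ∈ Finset.univ.filter (fun γ => hammingDist α γ = 1), f γ)
              * (starRingEnd ℂ) (chr q n β α) := by
      rw [hftr, Finset.mul_sum]
      exact Finset.sum_congr rfl fun α _ => by rw [hf α]; ring
    have h2 : ∑ α : Fin n → ZMod q,
          (∑ γ ∈ Finset.univ.filter (fun γ => hammingDist α γ = 1), f γ)
            * (starRingEnd ℂ) (chr q n β α)
        = ∑ γ : Fin n → ZMod q,
            ∑ α ∈ Finset.univ.filter (fun α => hammingDist γ α = 1),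
              f γ * (starRingEnd ℂ) (chr q n β α) := by
      rw [Finset.sum_congr rfl (fun α (_ : α ∈ Finset.univ) => Finset.sum_mul
        (Finset.univ.filter (fun γ => hammingDist α γ = 1)) f
        ((starRingEnd ℂ) (chr q n β α)))]
      apply Finset.sum_comm'
      intro γ α
      simp [hammingDist_comm γ α, and_comm]
    have h3 : ∀ γ : Fin n → ZMod q,
        (∑ α ∈ Finset.univ.filter (fun α => hammingDist γ α = 1),
          f γ * (starRingEnd ℂ) (chr q n β α))
        = f γ * (lam * (starRingEnd ℂ) (chr q n β γ)) := by
      intro γ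
      rw [← Finset.mul_sum, ← _root_.map_sum, eig_chr q n β γ, _root_.map_mul, hconj]
    rw [h1, h2, Finset.sum_congr rfl (fun γ _ => h3 γ), hftr, Finset.mul_sum]
    exact Finset.sum_congr rfl fun γ _ => by ring
  have h3 : (μ - lam) * ftr q n f β = 0 := by linear_combination key
  rcases mul_eq_zero.1 h3 with h | h
  · exact absurd (sub_eq_zero.1 h) hne
  · exact h
end chr2


section thm1
variable (q n : ℕ) [NeZero q]

lemma lwe_sum {ι : Type*} (s : Finset ι) (F : ι → (Fin n → ZMod q) → ℂ)
    (I : Finset (Fin n)) (α : Fin n → ZMod q) (x y : ℂ) :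
    lwe q n (fun γ => ∑ b ∈ s, F b γ) I α x y = ∑ b ∈ s, lwe q n (F b) I α x y := by
  simp only [lwe]
  rw [Finset.sum_comm]
  exact Finset.sum_congr rfl fun γ _ => by rw [Finset.sum_mul, Finset.sum_mul]

lemma lwe_smul (a : ℂ) (f : (Fin n → ZMod q) → ℂ)
    (I : Finset (Fin n)) (α : Fin n → ZMod q) (x y : ℂ) :
    lwe q n (fun γ => a * f γ) I α x y = a * lwe q n f I α x y := by
  simp only [lwe, Finset.mul_sum]
  exact Finset.sum_congr rfl fun γ _ => by ring

lemma lwe_congr {f g : (Fin n → ZMod q) → ℂ} (h : ∀ γ, f γ = g γ)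
    (I : Finset (Fin n)) (α : Fin n → ZMod q) (x y : ℂ) :
    lwe q n f I α x y = lwe q n g I α x y := by
  have : f = g := funext h
  rw [this]

theorem thm1 (f : (Fin n → ZMod q) → ℂ) (h : ℕ)
    (hf : IsEigenfun q n f (((q : ℂ) - 1) * n - (q : ℂ) * h))
    (α : Fin n → ZMod q) (I : Finset (Fin n)) (x y : ℂ) :
    (x - y) ^ I.card * lwe q n f Iᶜ α x y * (x + ((q : ℂ) - 1) * y) ^ h
      = (x + ((q : ℂ) - 1) * y) ^ Iᶜ.card
          * lwe q n f I α (x + ((q : ℂ) - 2) * y) (-y) * (x - y) ^ h := by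
  classical
  have hq0 : ((q : ℂ)) ^ n ≠ 0 := pow_ne_zero _ (Nat.cast_ne_zero.2 (NeZero.ne q))
  apply mul_left_cancel₀ hq0
  have expand : ∀ (J : Finset (Fin n)) (x' y' : ℂ),
      (q : ℂ) ^ n * lwe q n f J α x' y'
        = ∑ β : Fin n → ZMod q, ftr q n f β * lwe q n (chr q n β) J α x' y' := by
    intro J x' y'
    calc (q : ℂ) ^ n * lwe q n f J α x' y'
        = lwe q n (fun γ => (q : ℂ) ^ n * f γ) J α x' y' := (lwe_smul q n _ f J α x' y').symm
      _ = lwe q n (fun γ => ∑ β : Fin n → ZMod q, ftr q n f β * chr q n β γ) J α x' y' :=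
          lwe_congr q n (fun γ => by rw [inversion]) J α x' y'
      _ = ∑ β : Fin n → ZMod q, lwe q n (fun γ => ftr q n f β * chr q n β γ) J α x' y' :=
          lwe_sum q n Finset.univ _ J α x' y'
      _ = ∑ β : Fin n → ZMod q, ftr q n f β * lwe q n (chr q n β) J α x' y' :=
          Finset.sum_congr rfl fun β _ => lwe_smul q n _ _ J α x' y'
  have e1 : (q : ℂ) ^ n * ((x - y) ^ I.card * lwe q n f Iᶜ α x y
        * (x + ((q : ℂ) - 1) * y) ^ h)
      = ∑ β : Fin n → ZMod q, ftr q n f β * ((x - y) ^ I.card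
          * lwe q n (chr q n β) Iᶜ α x y * (x + ((q : ℂ) - 1) * y) ^ h) := by
    rw [show (q : ℂ) ^ n * ((x - y) ^ I.card * lwe q n f Iᶜ α x y
          * (x + ((q : ℂ) - 1) * y) ^ h)
        = (x - y) ^ I.card * ((q : ℂ) ^ n * lwe q n f Iᶜ α x y)
            * (x + ((q : ℂ) - 1) * y) ^ h by ring, expand, Finset.mul_sum, Finset.sum_mul]
    exact Finset.sum_congr rfl fun β _ => by ring
  have e2 : (q : ℂ) ^ n * ((x + ((q : ℂ) - 1) * y) ^ Iᶜ.card
        * lwe q n f I α (x + ((q : ℂ) - 2) * y) (-y) * (x - y) ^ h)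
      = ∑ β : Fin n → ZMod q, ftr q n f β * ((x + ((q : ℂ) - 1) * y) ^ Iᶜ.card
          * lwe q n (chr q n β) I α (x + ((q : ℂ) - 2) * y) (-y) * (x - y) ^ h) := by
    rw [show (q : ℂ) ^ n * ((x + ((q : ℂ) - 1) * y) ^ Iᶜ.card
          * lwe q n f I α (x + ((q : ℂ) - 2) * y) (-y) * (x - y) ^ h)
        = (x + ((q : ℂ) - 1) * y) ^ Iᶜ.card
            * ((q : ℂ) ^ n * lwe q n f I α (x + ((q : ℂ) - 2) * y) (-y))
            * (x - y) ^ h by ring, expand, Finset.mul_sum, Finset.sum_mul]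
    exact Finset.sum_congr rfl fun β _ => by ring
  rw [e1, e2]
  apply Finset.sum_congr rfl
  intro β _
  by_cases hw : ((supp q n β).card : ℕ) = h
  · -- per-character identity
    congr 1
    rw [lwe_chr, lwe_chr]
    have hA : (x + ((q : ℂ) - 2) * y) + ((q : ℂ) - 1) * (-y) = x - y := by ring
    have hB : (x + ((q : ℂ) - 2) * y) - (-y) = x + ((q : ℂ) - 1) * y := by ring
    rw [hA, hB]
    set c0I := (I.filter fun i => β i = 0).card with hc0I
    set c1I := (I.filter fun i => ¬ β i = 0).card with hc1I
    set c0c := (Iᶜ.filter fun i => β i = 0).card with hc0c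
    set c1c := (Iᶜ.filter fun i => ¬ β i = 0).card with hc1c
    have f1 : c0I + c1I = I.card := Finset.card_filter_add_card_filter_not _
    have f2 : c0c + c1c = Iᶜ.card := Finset.card_filter_add_card_filter_not _
    have f3 : c1I + c1c = h := by
      rw [← hw]
      have hsupp : supp q n β = Finset.univ.filter (fun i => ¬ β i = 0) := by
        apply Finset.filter_congr
        intro i _
        simp [ne_eq]
      rw [hsupp]
      have hu : (Finset.univ : Finset (Fin n)) = I ∪ Iᶜ := by
        rw [Finset.union_compl]
      rw [hu, Finset.filter_union]
      rw [Finset.card_union_of_disjoint]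
      exact Finset.disjoint_filter_filter (disjoint_compl_right)
    have g1 : I.card + c1c = c0I + h := by omega
    have g2 : c0c + h = Iᶜ.card + c1I := by omega
    calc (x - y) ^ I.card * (chr q n β α * (x + ((q : ℂ) - 1) * y) ^ c0c * (x - y) ^ c1c)
          * (x + ((q : ℂ) - 1) * y) ^ h
        = chr q n β α * (x + ((q : ℂ) - 1) * y) ^ (c0c + h) * (x - y) ^ (I.card + c1c) := by
          rw [pow_add, pow_add]; ring
      _ = chr q n β α * (x + ((q : ℂ) - 1) * y) ^ (Iᶜ.card + c1I) * (x - y) ^ (c0I + h) := by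
          rw [g1, g2]
      _ = (x + ((q : ℂ) - 1) * y) ^ Iᶜ.card
            * (chr q n β α * (x - y) ^ c0I * (x + ((q : ℂ) - 1) * y) ^ c1I)
            * (x - y) ^ h := by
          rw [pow_add, pow_add]; ring
  · have hzero : ftr q n f β = 0 := by
      apply ftr_eig q n f _ hf β
      intro hcon
      apply hw
      have hq' : (q : ℂ) ≠ 0 := Nat.cast_ne_zero.2 (NeZero.ne q)
      have : (q : ℂ) * ((supp q n β).card : ℕ) = (q : ℂ) * h := by linear_combination hcon
      have := mul_left_cancel₀ hq' this
      exact_mod_cast this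
    rw [hzero, zero_mul, zero_mul]
end thm1

/-- Theorem 2 (perfect colorings), with negative matrix exponents cleared:
`g^{Ī,α}_C(x,y)·(x+(q-1)y)^{h(S)-|Ī|E} = g^{I,α}_C(x',y')·(x'+(q-1)y')^{h(S)-|I|E}`,
where matrix powers `t^{h(S)-kE} = T diag(t^{h_i-k}) T⁻¹`, multiplied through by
the scalars `(x+(q-1)y)^{|Ī|} (x'+(q-1)y')^{|I|}`. -/
theorem stmt_11 (q n r : ℕ) [NeZero q] (hq : 2 ≤ q)
    (c : (Fin n → ZMod q) → Fin r) (S T : Matrix (Fin r) (Fin r) ℂ)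
    (μ : Fin r → ℂ) (hvec : Fin r → ℕ)
    (hC : adjM q n * colM q n r c = colM q n r c * S)
    (hT : IsUnit T.det) (hST : S * T = T * Matrix.diagonal μ)
    (hnum : ∀ i, hvec i ≤ n ∧ μ i = ((q : ℂ) - 1) * n - (q : ℂ) * hvec i)
    (α : Fin n → ZMod q) (I : Finset (Fin n)) (x y : ℂ) :
    ((x + ((q : ℂ) - 2) * y) + ((q : ℂ) - 1) * (-y)) ^ I.card •
      ((fun i => lwe q n (fun β => if c β = i then (1 : ℂ) else 0) Iᶜ α x y) ᵥ*
        (T * Matrix.diagonal (fun i => (x + ((q : ℂ) - 1) * y) ^ hvec i) * T⁻¹))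
    = (x + ((q : ℂ) - 1) * y) ^ Iᶜ.card •
        ((fun i => lwe q n (fun β => if c β = i then (1 : ℂ) else 0) I α
            (x + ((q : ℂ) - 2) * y) (-y)) ᵥ*
          (T * Matrix.diagonal
            (fun i => ((x + ((q : ℂ) - 2) * y) + ((q : ℂ) - 1) * (-y)) ^ hvec i) * T⁻¹)) := by
  classical
  have hxy : (x + ((q : ℂ) - 2) * y) + ((q : ℂ) - 1) * (-y) = x - y := by ring
  simp only [hxy]
  rw [← Matrix.smul_vecMul, ← Matrix.smul_vecMul,
    ← Matrix.vecMul_vecMul _ (T * Matrix.diagonal fun i => (x + ((q : ℂ) - 1) * y) ^ hvec i) T⁻¹,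
    ← Matrix.vecMul_vecMul _ (T * Matrix.diagonal fun i => (x - y) ^ hvec i) T⁻¹]
  refine congrArg (fun v => Matrix.vecMul v T⁻¹) ?_
  rw [← Matrix.vecMul_vecMul _ T (Matrix.diagonal fun i => (x + ((q : ℂ) - 1) * y) ^ hvec i),
    ← Matrix.vecMul_vecMul _ T (Matrix.diagonal fun i => (x - y) ^ hvec i)]
  funext j
  rw [Matrix.vecMul_diagonal, Matrix.vecMul_diagonal,
    Matrix.smul_vecMul, Matrix.smul_vecMul]
  simp only [Pi.smul_apply, smul_eq_mul]
  have hcollapse : ∀ (γ : Fin n → ZMod q),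
      ∑ i : Fin r, (if c γ = i then (1 : ℂ) else 0) * T i j = T (c γ) j := by
    intro γ
    simp only [ite_mul, one_mul, zero_mul]
    rw [Finset.sum_ite_eq Finset.univ (c γ) (fun i => T i j), if_pos (Finset.mem_univ _)]
  have hcol : ∀ (J : Finset (Fin n)) (x' y' : ℂ),
      ((fun i => lwe q n (fun β => if c β = i then (1 : ℂ) else 0) J α x' y') ᵥ* T) j
        = lwe q n (fun γ => T (c γ) j) J α x' y' := by
    intro J x' y'
    have h0 : ((fun i => lwe q n (fun β => if c β = i then (1 : ℂ) else 0) J α x' y') ᵥ* T) j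
        = ∑ i, lwe q n (fun β => if c β = i then (1 : ℂ) else 0) J α x' y' * T i j := rfl
    rw [h0]
    have h2 : ∀ i : Fin r, lwe q n (fun β => if c β = i then (1 : ℂ) else 0) J α x' y' * T i j
        = lwe q n (fun γ => (if c γ = i then (1 : ℂ) else 0) * T i j) J α x' y' := by
      intro i
      rw [mul_comm, ← lwe_smul q n (T i j)]
      exact lwe_congr q n (fun γ => by ring) J α x' y'
    rw [Finset.sum_congr rfl (fun i _ => h2 i), ← lwe_sum q n Finset.univ]
    exact lwe_congr q n (fun γ => hcollapse γ) J α x' y'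
  have heig : IsEigenfun q n (fun γ => T (c γ) j) (μ j) := by
    intro α'
    have hAC : ∀ i : Fin r,
        (∑ γ ∈ Finset.univ.filter (fun γ => hammingDist α' γ = 1),
          (if c γ = i then (1 : ℂ) else 0)) = (adjM q n * colM q n r c) α' i := by
      intro i
      rw [Matrix.mul_apply, Finset.sum_filter]
      apply Finset.sum_congr rfl
      intro γ _
      by_cases hd : hammingDist α' γ = 1 <;> simp [adjM, colM, hd]
    calc ∑ γ ∈ Finset.univ.filter (fun γ => hammingDist α' γ = 1), T (c γ) j
        = ∑ γ ∈ Finset.univ.filter (fun γ => hammingDist α' γ = 1),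
            ∑ i : Fin r, (if c γ = i then (1 : ℂ) else 0) * T i j :=
          Finset.sum_congr rfl fun γ _ => (hcollapse γ).symm
      _ = ∑ i : Fin r, (∑ γ ∈ Finset.univ.filter (fun γ => hammingDist α' γ = 1),
            (if c γ = i then (1 : ℂ) else 0)) * T i j := by
          rw [Finset.sum_comm]
          exact Finset.sum_congr rfl fun i _ => (Finset.sum_mul _ _ _).symm
      _ = ∑ i : Fin r, (adjM q n * colM q n r c) α' i * T i j :=
          Finset.sum_congr rfl fun i _ => by rw [hAC i]
      _ = ((adjM q n * colM q n r c) * T) α' j := (Matrix.mul_apply).symm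
      _ = ((colM q n r c * S) * T) α' j := by rw [hC]
      _ = (colM q n r c * (S * T)) α' j := by rw [Matrix.mul_assoc]
      _ = (colM q n r c * (T * Matrix.diagonal μ)) α' j := by rw [hST]
      _ = ((colM q n r c * T) * Matrix.diagonal μ) α' j := by rw [Matrix.mul_assoc]
      _ = (colM q n r c * T) α' j * μ j := Matrix.mul_diagonal _ _ _ _
      _ = μ j * T (c α') j := by
          rw [Matrix.mul_apply]
          simp only [colM]
          rw [hcollapse α', mul_comm]
  rw [hcol Iᶜ x y, hcol I (x + ((q : ℂ) - 2) * y) (-y)]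
  have heig2 : IsEigenfun q n (fun γ => T (c γ) j)
      (((q : ℂ) - 1) * n - (q : ℂ) * (hvec j)) := by
    rw [← (hnum j).2]; exact heig
  have hthm := thm1 q n (fun γ => T (c γ) j) (hvec j) heig2 α I x y
  linear_combination hthm
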